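/- arXiv:1103.2427 — 4 statements merged into one kernel-verified Lean document; each statement's English description precedes it below -/
import Mathlib

section
/- For every k ≥ 4, γ(P(6k,k)) ≤ ⌈10k/3⌉: the generalized Petersen graph P(6k,k) admits a dominating set of size ⌈10k/3⌉. -/
open SimpleGraph

/-- The generalized Petersen graph P(n,k): outer vertices `Sum.inl i`,
inner vertices `Sum.inr i`, indices in `ZMod n`. -/
def petersen (n k : ℕ) : SimpleGraph (ZMod n ⊕ ZMod n) :=
  SimpleGraph.fromRel (fun a b =>
    match a, b with
    | Sum.inl i, Sum.inl j => j = i + 1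
    | Sum.inl i, Sum.inr j => j = i
    | Sum.inr i, Sum.inr j => j = i + (k : ZMod n)
    | _, _ => False)

/-- S is a dominating set: N[S] = V. -/
def IsDominating {V : Type*} (G : SimpleGraph V) (S : Set V) : Prop :=
  ∀ v, v ∈ S ∨ ∃ u ∈ S, G.Adj u v

/-- The domination number: minimum cardinality of a (finite) dominating set. -/
noncomputable def gamma {V : Type*} (G : SimpleGraph V) : ℕ :=
  sInf {m | ∃ S : Finset V, IsDominating G ↑S ∧ S.card = m}

namespace P6kAux

/-- dominating set candidate built from inner indices `U` and outer indices `W`. -/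
def SS (k : ℕ) (U W : Finset ℕ) : Finset (ZMod (6*k) ⊕ ZMod (6*k)) :=
  (U.image fun i : ℕ => (Sum.inr (i : ZMod (6*k)) : ZMod (6*k) ⊕ ZMod (6*k))) ∪
  (W.image fun i : ℕ => (Sum.inl (i : ZMod (6*k)) : ZMod (6*k) ⊕ ZMod (6*k)))

variable {k : ℕ}

lemma mem_SS_inr {U W : Finset ℕ} {w : ℕ} (h : w ∈ U) :
    (Sum.inr (w : ZMod (6*k)) : ZMod (6*k) ⊕ ZMod (6*k)) ∈ SS k U W :=
  Finset.mem_union_left _ (Finset.mem_image.mpr ⟨w, h, rfl⟩)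

lemma mem_SS_inl {U W : Finset ℕ} {w : ℕ} (h : w ∈ W) :
    (Sum.inl (w : ZMod (6*k)) : ZMod (6*k) ⊕ ZMod (6*k)) ∈ SS k U W :=
  Finset.mem_union_right _ (Finset.mem_image.mpr ⟨w, h, rfl⟩)

lemma cast_inj (hk : 4 ≤ k) {a b : ℕ} (ha : a < 6*k) (hb : b < 6*k)
    (h : (a : ZMod (6*k)) = (b : ZMod (6*k))) : a = b := by
  have h1 : (a : ZMod (6*k)).val = a := ZMod.val_cast_of_lt ha
  have h2 : (b : ZMod (6*k)).val = b := ZMod.val_cast_of_lt hb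
  rw [← h1, ← h2, h]

lemma cast_wrap {a : ℕ} : ((a + 6*k : ℕ) : ZMod (6*k)) = (a : ZMod (6*k)) := by
  rw [Nat.cast_add, ZMod.natCast_self, add_zero]

lemma cast_addk {a b : ℕ} (h : a + k = b) :
    (b : ZMod (6*k)) = (a : ZMod (6*k)) + (k : ZMod (6*k)) := by
  subst h; rw [Nat.cast_add]

lemma cast_addk' {a b : ℕ} (h : a + k = b + 6*k) :
    (b : ZMod (6*k)) = (a : ZMod (6*k)) + (k : ZMod (6*k)) := by
  have h1 : ((b + 6*k : ℕ) : ZMod (6*k)) = ((a + k : ℕ) : ZMod (6*k)) := by rw [h]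
  rw [cast_wrap, Nat.cast_add] at h1
  exact h1

lemma cast_add1 {a b : ℕ} (h : a + 1 = b) :
    (b : ZMod (6*k)) = (a : ZMod (6*k)) + 1 := by
  subst h; rw [Nat.cast_add, Nat.cast_one]

lemma cast_add1' {a b : ℕ} (h : a + 1 = b + 6*k) :
    (b : ZMod (6*k)) = (a : ZMod (6*k)) + 1 := by
  have h1 : ((b + 6*k : ℕ) : ZMod (6*k)) = ((a + 1 : ℕ) : ZMod (6*k)) := by rw [h]
  rw [cast_wrap, Nat.cast_add, Nat.cast_one] at h1
  exact h1

lemma adj_uu (hk : 4 ≤ k) {w m : ℕ} (hw : w < 6*k) (hm : m < 6*k)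
    (h : w + k = m ∨ m + k = w ∨ w + k = m + 6*k ∨ m + k = w + 6*k) :
    (petersen (6*k) k).Adj (Sum.inr (w : ZMod (6*k))) (Sum.inr (m : ZMod (6*k))) := by
  have hne : (Sum.inr (w : ZMod (6*k)) : ZMod (6*k) ⊕ ZMod (6*k)) ≠ Sum.inr (m : ZMod (6*k)) := by
    intro hc
    have := cast_inj hk hw hm (Sum.inr.inj hc)
    omega
  rw [petersen, SimpleGraph.fromRel_adj]
  refine ⟨hne, ?_⟩
  rcases h with h | h | h | h
  · exact Or.inl (cast_addk h)
  · exact Or.inr (cast_addk h)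
  · exact Or.inl (cast_addk' h)
  · exact Or.inr (cast_addk' h)

lemma adj_vv (hk : 4 ≤ k) {w m : ℕ} (hw : w < 6*k) (hm : m < 6*k)
    (h : w + 1 = m ∨ m + 1 = w ∨ w + 1 = m + 6*k ∨ m + 1 = w + 6*k) :
    (petersen (6*k) k).Adj (Sum.inl (w : ZMod (6*k))) (Sum.inl (m : ZMod (6*k))) := by
  have hne : (Sum.inl (w : ZMod (6*k)) : ZMod (6*k) ⊕ ZMod (6*k)) ≠ Sum.inl (m : ZMod (6*k)) := by
    intro hc
    have := cast_inj hk hw hm (Sum.inl.inj hc)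
    omega
  rw [petersen, SimpleGraph.fromRel_adj]
  refine ⟨hne, ?_⟩
  rcases h with h | h | h | h
  · exact Or.inl (cast_add1 h)
  · exact Or.inr (cast_add1 h)
  · exact Or.inl (cast_add1' h)
  · exact Or.inr (cast_add1' h)

lemma adj_uv (m : ℕ) :
    (petersen (6*k) k).Adj (Sum.inr (m : ZMod (6*k))) (Sum.inl (m : ZMod (6*k))) := by
  rw [petersen, SimpleGraph.fromRel_adj]
  exact ⟨Sum.inr_ne_inl, Or.inr rfl⟩

lemma adj_vu (m : ℕ) :
    (petersen (6*k) k).Adj (Sum.inl (m : ZMod (6*k))) (Sum.inr (m : ZMod (6*k))) := by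
  rw [petersen, SimpleGraph.fromRel_adj]
  exact ⟨Sum.inl_ne_inr, Or.inl rfl⟩

/-- domination of an outer vertex by a run of stations base, base+3, ..., base+3(c-1). -/
lemma dom_station (hk : 4 ≤ k) {U W : Finset ℕ} {base c m : ℕ}
    (hmem : ∀ t, t < c → base + 3*t ∈ W)
    (h1 : base ≤ m + 1) (h2 : m + 2 ≤ base + 3*c) (hm : m < 6*k) (hc : base + 3*c ≤ 6*k + 2) :
    (Sum.inl (m : ZMod (6*k)) : ZMod (6*k) ⊕ ZMod (6*k)) ∈ (↑(SS k U W) : Set _) ∨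
      ∃ u ∈ (↑(SS k U W) : Set _), (petersen (6*k) k).Adj u (Sum.inl (m : ZMod (6*k))) := by
  set d := m + 1 - base with hd
  set q := d / 3 with hq
  have hqc : q < c := by omega
  have hs : base + 3*q < 6*k := by omega
  rcases (by omega : d % 3 = 0 ∨ d % 3 = 1 ∨ d % 3 = 2) with h | h | h
  · refine Or.inr ⟨Sum.inl ((base + 3*q : ℕ) : ZMod (6*k)), ?_, adj_vv hk hs hm (by omega)⟩
    exact Finset.mem_coe.mpr (mem_SS_inl (hmem q hqc))
  · left
    have hmq : m = base + 3*q := by omega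
    rw [hmq]
    exact Finset.mem_coe.mpr (mem_SS_inl (hmem q hqc))
  · refine Or.inr ⟨Sum.inl ((base + 3*q : ℕ) : ZMod (6*k)), ?_, adj_vv hk hs hm (by omega)⟩
    exact Finset.mem_coe.mpr (mem_SS_inl (hmem q hqc))

/-! ### Scheme A : for `k % 3 ≠ 2` -/

def UA (k : ℕ) : Finset ℕ := Finset.Ico 0 k ∪ Finset.Ico (3*k) (4*k)
def WA (k : ℕ) : Finset ℕ :=
  ((Finset.range ((2*k+2)/3)).image fun t => k+1+3*t) ∪
  ((Finset.range ((2*k+2)/3)).image fun t => 4*k+1+3*t)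

lemma mem_UA {m : ℕ} (h : m < k ∨ (3*k ≤ m ∧ m < 4*k)) : m ∈ UA k := by
  simp only [UA, Finset.mem_union, Finset.mem_Ico]
  omega

lemma domA (hk : 4 ≤ k) (h3 : k % 3 ≠ 2) :
    IsDominating (petersen (6*k) k) ↑(SS k (UA k) (WA k)) := by
  haveI : NeZero (6*k) := ⟨by omega⟩
  have hmem1 : ∀ t, t < (2*k+2)/3 → k+1+3*t ∈ WA k := by
    intro t ht
    simp only [WA, Finset.mem_union, Finset.mem_image, Finset.mem_range]
    exact Or.inl ⟨t, ht, rfl⟩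
  have hmem2 : ∀ t, t < (2*k+2)/3 → 4*k+1+3*t ∈ WA k := by
    intro t ht
    simp only [WA, Finset.mem_union, Finset.mem_image, Finset.mem_range]
    exact Or.inr ⟨t, ht, rfl⟩
  intro v
  cases v with
  | inl x =>
    obtain ⟨m, hm, rfl⟩ : ∃ m : ℕ, m < 6*k ∧ (m : ZMod (6*k)) = x :=
      ⟨x.val, ZMod.val_lt x, ZMod.natCast_rightInverse x⟩
    rcases (by omega : m < k ∨ (k ≤ m ∧ m < 3*k) ∨ (3*k ≤ m ∧ m < 4*k) ∨ (4*k ≤ m ∧ m < 6*k))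
      with h | h | h | h
    · exact Or.inr ⟨Sum.inr (m : ZMod (6*k)),
        Finset.mem_coe.mpr (mem_SS_inr (mem_UA (Or.inl h))), adj_uv m⟩
    · exact dom_station hk hmem1 (by omega) (by omega) hm (by omega)
    · exact Or.inr ⟨Sum.inr (m : ZMod (6*k)),
        Finset.mem_coe.mpr (mem_SS_inr (mem_UA (Or.inr h))), adj_uv m⟩
    · exact dom_station hk hmem2 (by omega) (by omega) hm (by omega)
  | inr x =>
    obtain ⟨m, hm, rfl⟩ : ∃ m : ℕ, m < 6*k ∧ (m : ZMod (6*k)) = x :=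
      ⟨x.val, ZMod.val_lt x, ZMod.natCast_rightInverse x⟩
    rcases (by omega : m < k ∨ (k ≤ m ∧ m < 2*k) ∨ (2*k ≤ m ∧ m < 3*k) ∨ (3*k ≤ m ∧ m < 4*k)
        ∨ (4*k ≤ m ∧ m < 5*k) ∨ (5*k ≤ m ∧ m < 6*k)) with h | h | h | h | h | h
    · exact Or.inl (Finset.mem_coe.mpr (mem_SS_inr (mem_UA (Or.inl (by omega)))))
    · exact Or.inr ⟨Sum.inr ((m - k : ℕ) : ZMod (6*k)),
        Finset.mem_coe.mpr (mem_SS_inr (mem_UA (Or.inl (by omega)))),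
        adj_uu hk (by omega) hm (by omega)⟩
    · exact Or.inr ⟨Sum.inr ((m + k : ℕ) : ZMod (6*k)),
        Finset.mem_coe.mpr (mem_SS_inr (mem_UA (Or.inr (by omega)))),
        adj_uu hk (by omega) hm (by omega)⟩
    · exact Or.inl (Finset.mem_coe.mpr (mem_SS_inr (mem_UA (Or.inr (by omega)))))
    · exact Or.inr ⟨Sum.inr ((m - k : ℕ) : ZMod (6*k)),
        Finset.mem_coe.mpr (mem_SS_inr (mem_UA (Or.inr (by omega)))),
        adj_uu hk (by omega) hm (by omega)⟩
    · exact Or.inr ⟨Sum.inr ((m - 5*k : ℕ) : ZMod (6*k)),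
        Finset.mem_coe.mpr (mem_SS_inr (mem_UA (Or.inl (by omega)))),
        adj_uu hk (by omega) hm (by omega)⟩

/-! ### Scheme C : for `k % 3 = 2` -/

def UC (k : ℕ) : Finset ℕ :=
  (Finset.Ico 3 (k-1) ∪ Finset.Ico (3*k+3) (4*k+3)) ∪ ({k, k+2, 2*k+1, 6*k-1} : Finset ℕ)
def WC (k : ℕ) : Finset ℕ :=
  ({1, k} : Finset ℕ) ∪
  (((Finset.range ((k-2)/3)).image fun t => k+4+3*t) ∪
   ((Finset.range ((k+1)/3)).image fun t => 2*k+3+3*t) ∪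
   ((Finset.range ((2*k-4)/3)).image fun t => 4*k+4+3*t))

lemma mem_UC (hk : 4 ≤ k) {m : ℕ}
    (h : (3 ≤ m ∧ m ≤ k-2) ∨ (3*k+3 ≤ m ∧ m ≤ 4*k+2) ∨ m = k ∨ m = k+2 ∨ m = 2*k+1 ∨ m = 6*k-1) :
    m ∈ UC k := by
  simp only [UC, Finset.mem_union, Finset.mem_Ico, Finset.mem_insert, Finset.mem_singleton]
  omega

lemma domC (hk : 4 ≤ k) (h3 : k % 3 = 2) :
    IsDominating (petersen (6*k) k) ↑(SS k (UC k) (WC k)) := by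
  haveI : NeZero (6*k) := ⟨by omega⟩
  have hk5 : 5 ≤ k := by omega
  have hmemW : ∀ w : ℕ, (w = 1 ∨ w = k ∨ (∃ t, t < (k-2)/3 ∧ k+4+3*t = w)
      ∨ (∃ t, t < (k+1)/3 ∧ 2*k+3+3*t = w) ∨ (∃ t, t < (2*k-4)/3 ∧ 4*k+4+3*t = w)) → w ∈ WC k := by
    intro w hw
    simp only [WC, Finset.mem_union, Finset.mem_insert, Finset.mem_singleton, Finset.mem_image,
      Finset.mem_range]
    rcases hw with h | h | ⟨t, ht, he⟩ | ⟨t, ht, he⟩ | ⟨t, ht, he⟩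
    · exact Or.inl (Or.inl h)
    · exact Or.inl (Or.inr h)
    · exact Or.inr (Or.inl (Or.inl ⟨t, ht, he⟩))
    · exact Or.inr (Or.inl (Or.inr ⟨t, ht, he⟩))
    · exact Or.inr (Or.inr ⟨t, ht, he⟩)
  have hmem0 : ∀ t, t < 1 → 1 + 3*t ∈ WC k := by
    intro t ht
    have : t = 0 := by omega
    subst this
    exact hmemW _ (Or.inl (by norm_num))
  have hmemk : ∀ t, t < 1 → k + 3*t ∈ WC k := by
    intro t ht
    have : t = 0 := by omega
    subst this
    exact hmemW _ (Or.inr (Or.inl (by norm_num)))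
  have hmem1 : ∀ t, t < (k-2)/3 → k+4+3*t ∈ WC k := fun t ht =>
    hmemW _ (Or.inr (Or.inr (Or.inl ⟨t, ht, rfl⟩)))
  have hmem2 : ∀ t, t < (k+1)/3 → 2*k+3+3*t ∈ WC k := fun t ht =>
    hmemW _ (Or.inr (Or.inr (Or.inr (Or.inl ⟨t, ht, rfl⟩))))
  have hmem3 : ∀ t, t < (2*k-4)/3 → 4*k+4+3*t ∈ WC k := fun t ht =>
    hmemW _ (Or.inr (Or.inr (Or.inr (Or.inr ⟨t, ht, rfl⟩))))
  intro v
  cases v with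
  | inl x =>
    obtain ⟨m, hm, rfl⟩ : ∃ m : ℕ, m < 6*k ∧ (m : ZMod (6*k)) = x :=
      ⟨x.val, ZMod.val_lt x, ZMod.natCast_rightInverse x⟩
    rcases (by omega : m ≤ 2 ∨ (3 ≤ m ∧ m ≤ k-2) ∨ (k-1 ≤ m ∧ m ≤ k+1) ∨ m = k+2
        ∨ (k+3 ≤ m ∧ m ≤ 2*k) ∨ m = 2*k+1 ∨ (2*k+2 ≤ m ∧ m ≤ 3*k+2)
        ∨ (3*k+3 ≤ m ∧ m ≤ 4*k+2) ∨ (4*k+3 ≤ m ∧ m ≤ 6*k-2) ∨ m = 6*k-1)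
      with h | h | h | h | h | h | h | h | h | h
    · exact dom_station hk hmem0 (by omega) (by omega) hm (by omega)
    · exact Or.inr ⟨Sum.inr (m : ZMod (6*k)),
        Finset.mem_coe.mpr (mem_SS_inr (mem_UC hk (by omega))), adj_uv m⟩
    · exact dom_station hk hmemk (by omega) (by omega) hm (by omega)
    · exact Or.inr ⟨Sum.inr (m : ZMod (6*k)),
        Finset.mem_coe.mpr (mem_SS_inr (mem_UC hk (by omega))), adj_uv m⟩
    · exact dom_station hk hmem1 (by omega) (by omega) hm (by omega)
    · exact Or.inr ⟨Sum.inr (m : ZMod (6*k)),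
        Finset.mem_coe.mpr (mem_SS_inr (mem_UC hk (by omega))), adj_uv m⟩
    · exact dom_station hk hmem2 (by omega) (by omega) hm (by omega)
    · exact Or.inr ⟨Sum.inr (m : ZMod (6*k)),
        Finset.mem_coe.mpr (mem_SS_inr (mem_UC hk (by omega))), adj_uv m⟩
    · exact dom_station hk hmem3 (by omega) (by omega) hm (by omega)
    · exact Or.inr ⟨Sum.inr (m : ZMod (6*k)),
        Finset.mem_coe.mpr (mem_SS_inr (mem_UC hk (by omega))), adj_uv m⟩
  | inr x =>
    obtain ⟨m, hm, rfl⟩ : ∃ m : ℕ, m < 6*k ∧ (m : ZMod (6*k)) = x :=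
      ⟨x.val, ZMod.val_lt x, ZMod.natCast_rightInverse x⟩
    rcases (by omega : m = 0 ∨ m = 1 ∨ m = 2 ∨ (3 ≤ m ∧ m ≤ k-2) ∨ m = k-1 ∨ m = k
        ∨ m = k+1 ∨ m = k+2 ∨ (k+3 ≤ m ∧ m ≤ 2*k-2) ∨ m = 2*k-1 ∨ m = 2*k ∨ m = 2*k+1
        ∨ m = 2*k+2 ∨ (2*k+3 ≤ m ∧ m ≤ 3*k+2) ∨ (3*k+3 ≤ m ∧ m ≤ 4*k+2)
        ∨ (4*k+3 ≤ m ∧ m ≤ 5*k+2) ∨ (5*k+3 ≤ m ∧ m ≤ 6*k-2) ∨ m = 6*k-1)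
      with h | h | h | h | h | h | h | h | h | h | h | h | h | h | h | h | h | h
    · -- m = 0 : witness u_k
      exact Or.inr ⟨Sum.inr ((k : ℕ) : ZMod (6*k)),
        Finset.mem_coe.mpr (mem_SS_inr (mem_UC hk (by omega))),
        adj_uu hk (by omega) hm (by omega)⟩
    · -- m = 1 : station v_1 assists
      subst h
      exact Or.inr ⟨Sum.inl ((1 : ℕ) : ZMod (6*k)),
        Finset.mem_coe.mpr (mem_SS_inl (hmemW 1 (Or.inl rfl))), adj_vu 1⟩
    · exact Or.inr ⟨Sum.inr ((k+2 : ℕ) : ZMod (6*k)),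
        Finset.mem_coe.mpr (mem_SS_inr (mem_UC hk (by omega))),
        adj_uu hk (by omega) hm (by omega)⟩
    · exact Or.inl (Finset.mem_coe.mpr (mem_SS_inr (mem_UC hk (by omega))))
    · -- m = k-1 : witness u_{6k-1}
      exact Or.inr ⟨Sum.inr ((6*k-1 : ℕ) : ZMod (6*k)),
        Finset.mem_coe.mpr (mem_SS_inr (mem_UC hk (by omega))),
        adj_uu hk (by omega) hm (by omega)⟩
    · exact Or.inl (Finset.mem_coe.mpr (mem_SS_inr (mem_UC hk (by omega))))
    · -- m = k+1 : witness u_{2k+1}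
      exact Or.inr ⟨Sum.inr ((2*k+1 : ℕ) : ZMod (6*k)),
        Finset.mem_coe.mpr (mem_SS_inr (mem_UC hk (by omega))),
        adj_uu hk (by omega) hm (by omega)⟩
    · exact Or.inl (Finset.mem_coe.mpr (mem_SS_inr (mem_UC hk (by omega))))
    · -- run via m-k
      exact Or.inr ⟨Sum.inr ((m-k : ℕ) : ZMod (6*k)),
        Finset.mem_coe.mpr (mem_SS_inr (mem_UC hk (by omega))),
        adj_uu hk (by omega) hm (by omega)⟩
    · -- m = 2k-1 : station assists
      subst h
      exact Or.inr ⟨Sum.inl ((2*k-1 : ℕ) : ZMod (6*k)),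
        Finset.mem_coe.mpr (mem_SS_inl (hmemW _ (Or.inr (Or.inr (Or.inl
          ⟨(k-5)/3, by omega, by omega⟩))))), adj_vu (2*k-1)⟩
    · -- m = 2k : witness u_k
      exact Or.inr ⟨Sum.inr ((k : ℕ) : ZMod (6*k)),
        Finset.mem_coe.mpr (mem_SS_inr (mem_UC hk (by omega))),
        adj_uu hk (by omega) hm (by omega)⟩
    · exact Or.inl (Finset.mem_coe.mpr (mem_SS_inr (mem_UC hk (by omega))))
    · -- m = 2k+2 : witness u_{k+2}
      exact Or.inr ⟨Sum.inr ((k+2 : ℕ) : ZMod (6*k)),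
        Finset.mem_coe.mpr (mem_SS_inr (mem_UC hk (by omega))),
        adj_uu hk (by omega) hm (by omega)⟩
    · -- witness m+k in [3k+3, 4k+2]
      exact Or.inr ⟨Sum.inr ((m+k : ℕ) : ZMod (6*k)),
        Finset.mem_coe.mpr (mem_SS_inr (mem_UC hk (by omega))),
        adj_uu hk (by omega) hm (by omega)⟩
    · exact Or.inl (Finset.mem_coe.mpr (mem_SS_inr (mem_UC hk (by omega))))
    · exact Or.inr ⟨Sum.inr ((m-k : ℕ) : ZMod (6*k)),
        Finset.mem_coe.mpr (mem_SS_inr (mem_UC hk (by omega))),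
        adj_uu hk (by omega) hm (by omega)⟩
    · -- witness m-5k in [3, k-2]
      exact Or.inr ⟨Sum.inr ((m-5*k : ℕ) : ZMod (6*k)),
        Finset.mem_coe.mpr (mem_SS_inr (mem_UC hk (by omega))),
        adj_uu hk (by omega) hm (by omega)⟩
    · exact Or.inl (Finset.mem_coe.mpr (mem_SS_inr (mem_UC hk (by omega))))

lemma card_UA (hk : 4 ≤ k) : (UA k).card ≤ 2*k := by
  refine le_trans (Finset.card_union_le _ _) ?_
  rw [Nat.card_Ico, Nat.card_Ico]
  omega

lemma card_WA (hk : 4 ≤ k) : (WA k).card ≤ 2*((2*k+2)/3) := by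
  refine le_trans (Finset.card_union_le _ _) ?_
  have h1 := Finset.card_image_le (s := Finset.range ((2*k+2)/3)) (f := fun t => k+1+3*t)
  have h2 := Finset.card_image_le (s := Finset.range ((2*k+2)/3)) (f := fun t => 4*k+1+3*t)
  rw [Finset.card_range] at h1 h2
  omega

lemma card_UC (hk : 4 ≤ k) : (UC k).card ≤ 2*k := by
  refine le_trans (Finset.card_union_le _ _) ?_
  have h1 : (Finset.Ico 3 (k-1) ∪ Finset.Ico (3*k+3) (4*k+3)).card ≤ (k-4) + k := by
    refine le_trans (Finset.card_union_le _ _) ?_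
    rw [Nat.card_Ico, Nat.card_Ico]
    omega
  have h2 : ({k, k+2, 2*k+1, 6*k-1} : Finset ℕ).card ≤ 4 := by
    refine le_trans (Finset.card_insert_le _ _) ?_
    refine Nat.succ_le_succ ?_
    refine le_trans (Finset.card_insert_le _ _) ?_
    refine Nat.succ_le_succ ?_
    refine le_trans (Finset.card_insert_le _ _) ?_
    simp
  omega

lemma card_WC (hk : 4 ≤ k) : (WC k).card ≤ 2 + (k-2)/3 + (k+1)/3 + (2*k-4)/3 := by
  refine le_trans (Finset.card_union_le _ _) ?_
  have h0 : ({1, k} : Finset ℕ).card ≤ 2 := by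
    refine le_trans (Finset.card_insert_le _ _) ?_
    simp
  have hrest : (((Finset.range ((k-2)/3)).image fun t => k+4+3*t) ∪
      ((Finset.range ((k+1)/3)).image fun t => 2*k+3+3*t) ∪
      ((Finset.range ((2*k-4)/3)).image fun t => 4*k+4+3*t)).card
      ≤ (k-2)/3 + (k+1)/3 + (2*k-4)/3 := by
    refine le_trans (Finset.card_union_le _ _) ?_
    have h3 := Finset.card_image_le (s := Finset.range ((2*k-4)/3)) (f := fun t => 4*k+4+3*t)
    rw [Finset.card_range] at h3
    have h12 : (((Finset.range ((k-2)/3)).image fun t => k+4+3*t) ∪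
        ((Finset.range ((k+1)/3)).image fun t => 2*k+3+3*t)).card ≤ (k-2)/3 + (k+1)/3 := by
      refine le_trans (Finset.card_union_le _ _) ?_
      have h1 := Finset.card_image_le (s := Finset.range ((k-2)/3)) (f := fun t => k+4+3*t)
      have h2 := Finset.card_image_le (s := Finset.range ((k+1)/3)) (f := fun t => 2*k+3+3*t)
      rw [Finset.card_range] at h1 h2
      omega
    omega
  omega

lemma gamma_le_SS (U W : Finset ℕ)
    (h : IsDominating (petersen (6*k) k) ↑(SS k U W)) :
    gamma (petersen (6*k) k) ≤ U.card + W.card := by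
  refine le_trans (Nat.sInf_le ⟨SS k U W, h, rfl⟩) ?_
  refine le_trans (Finset.card_union_le _ _) ?_
  exact Nat.add_le_add (Finset.card_image_le) (Finset.card_image_le)

end P6kAux

theorem gamma_P6k_upper (k : ℕ) (hk : 4 ≤ k) :
    gamma (petersen (6 * k) k) ≤ (10 * k + 2) / 3 := by
  by_cases h3 : k % 3 = 2
  · have h := P6kAux.gamma_le_SS (k := k) (P6kAux.UC k) (P6kAux.WC k) (P6kAux.domC hk h3)
    have h1 := P6kAux.card_UC (k := k) hk
    have h2 := P6kAux.card_WC (k := k) hk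
    obtain ⟨t, rfl⟩ : ∃ t, k = 3*t+2 := ⟨k/3, by omega⟩
    have e1 : (3*t+2-2)/3 = t := by omega
    have e2 : (3*t+2+1)/3 = t+1 := by omega
    have e3 : (2*(3*t+2)-4)/3 = 2*t := by omega
    have e4 : (10*(3*t+2)+2)/3 = 10*t+7 := by omega
    omega
  · have h := P6kAux.gamma_le_SS (k := k) (P6kAux.UA k) (P6kAux.WA k) (P6kAux.domA hk h3)
    have h1 := P6kAux.card_UA (k := k) hk
    have h2 := P6kAux.card_WA (k := k) hk
    rcases (by omega : k % 3 = 0 ∨ k % 3 = 1) with h0 | h0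
    · obtain ⟨t, rfl⟩ : ∃ t, k = 3*t := ⟨k/3, by omega⟩
      have e1 : (2*(3*t)+2)/3 = 2*t := by omega
      have e2 : (10*(3*t)+2)/3 = 10*t := by omega
      omega
    · obtain ⟨t, rfl⟩ : ∃ t, k = 3*t+1 := ⟨k/3, by omega⟩
      have e1 : (2*(3*t+1)+2)/3 = 2*t+1 := by omega
      have e2 : (10*(3*t+1)+2)/3 = 10*t+4 := by omega
      omega
end

section
/- Let S be a dominating set of P(6k,k) with k ≥ 4, and for 0 ≤ i ≤ k−1 let S_i = S ∩ ({v_{i+jk} : 0 ≤ j ≤ 5} ∪ {u_{i+jk} : 0 ≤ j ≤ 5}). Then |S_i| ≥ 2 for all i, and if |S_ℓ ∩ {u_{ℓ+jk} : 0 ≤ j ≤ 5}| = 1 for some ℓ, then |S_ℓ| ≥ 4. -/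
open SimpleGraph

/-- The `i`-th column of a vertex subset of P(6k,k). -/
def slice6 (k : ℕ) (S : Finset (ZMod (6 * k) ⊕ ZMod (6 * k))) (i : ℕ) :
    Set (ZMod (6 * k) ⊕ ZMod (6 * k)) :=
  {x | x ∈ S ∧ ∃ j ≤ 5, x = Sum.inl ((i + j * k : ℕ) : ZMod (6 * k)) ∨
        x = Sum.inr ((i + j * k : ℕ) : ZMod (6 * k))}

/-- Index of the `j`-th vertex of column `i`. -/
def Fidx (k i j : ℕ) : ZMod (6 * k) := ((i + j * k : ℕ) : ZMod (6 * k))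

lemma Fidx_inj {k i a b : ℕ} (hk : 4 ≤ k) (hi : i < k) (ha : a ≤ 5) (hb : b ≤ 5)
    (h : Fidx k i a = Fidx k i b) : a = b := by
  haveI : NeZero (6 * k) := ⟨by omega⟩
  have h' := congrArg ZMod.val h
  rw [Fidx, Fidx, ZMod.val_cast_of_lt (by nlinarith), ZMod.val_cast_of_lt (by nlinarith)] at h'
  have hka : a * k = b * k := by omega
  exact Nat.eq_of_mul_eq_mul_right (by omega) hka

lemma Fidx_step {k : ℕ} (hk : 4 ≤ k) (i : ℕ) {j : ℕ} (hj : j ≤ 5) :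
    Fidx k i j + (k : ZMod (6 * k)) = Fidx k i ((j + 1) % 6) := by
  have h6 : ((6 * k : ℕ) : ZMod (6 * k)) = 0 := ZMod.natCast_self _
  push_cast at h6
  interval_cases j <;> simp only [Fidx] <;> push_cast <;>
    first
    | ring1
    | linear_combination h6

lemma dom_mem {k : ℕ} (hk : 4 ≤ k) (S : Finset (ZMod (6 * k) ⊕ ZMod (6 * k)))
    (hS : IsDominating (petersen (6 * k) k) ↑S) (i : ℕ) (hi : i < k) (j : ℕ) (hj : j ≤ 5) :
    ∃ x ∈ slice6 k S i, x = Sum.inl (Fidx k i j) ∨ x = Sum.inr (Fidx k i j) ∨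
      x = Sum.inr (Fidx k i ((j + 1) % 6)) ∨ x = Sum.inr (Fidx k i ((j + 5) % 6)) := by
  rcases hS (Sum.inr (Fidx k i j)) with h | ⟨w, hw, hadj⟩
  · exact ⟨_, ⟨h, j, hj, Or.inr rfl⟩, Or.inr (Or.inl rfl)⟩
  · rw [petersen, SimpleGraph.fromRel_adj] at hadj
    obtain ⟨hne, hrel⟩ := hadj
    rcases w with m | m
    · rcases hrel with h | h
      · have h' : Fidx k i j = m := h
        exact ⟨_, ⟨hw, j, hj, Or.inl (congrArg Sum.inl h'.symm)⟩,
          Or.inl (congrArg Sum.inl h'.symm)⟩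
      · exact absurd h (by simp [petersen])
    · rcases hrel with h | h
      · have h' : Fidx k i j = m + (k : ZMod (6 * k)) := h
        have hm : m = Fidx k i ((j + 5) % 6) := by
          have h2 : Fidx k i ((j + 5) % 6) + (k : ZMod (6 * k)) = Fidx k i j := by
            rw [Fidx_step hk i (by omega : (j + 5) % 6 ≤ 5)]
            have he : ((j + 5) % 6 + 1) % 6 = j := by omega
            rw [he]
          exact add_right_cancel (h'.symm.trans h2.symm)
        exact ⟨_, ⟨hw, (j + 5) % 6, by omega, Or.inr (congrArg Sum.inr hm)⟩,
          Or.inr (Or.inr (Or.inr (congrArg Sum.inr hm)))⟩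
      · have h' : m = Fidx k i j + (k : ZMod (6 * k)) := h
        have hm : m = Fidx k i ((j + 1) % 6) := by rw [h', Fidx_step hk i hj]
        exact ⟨_, ⟨hw, (j + 1) % 6, by omega, Or.inr (congrArg Sum.inr hm)⟩,
          Or.inr (Or.inr (Or.inl (congrArg Sum.inr hm)))⟩

theorem slice6_lower (k : ℕ) (hk : 4 ≤ k)
    (S : Finset (ZMod (6 * k) ⊕ ZMod (6 * k))) (hS : IsDominating (petersen (6 * k) k) ↑S) :
    (∀ i < k, 2 ≤ (slice6 k S i).ncard) ∧
    ∀ ℓ < k,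
      ({x ∈ slice6 k S ℓ | ∃ j ≤ 5, x = Sum.inr ((ℓ + j * k : ℕ) : ZMod (6 * k))}).ncard = 1 →
      4 ≤ (slice6 k S ℓ).ncard := by
  haveI : NeZero (6 * k) := ⟨by omega⟩
  constructor
  · intro i hi
    obtain ⟨x, hx, hx'⟩ := dom_mem hk S hS i hi 0 (by norm_num)
    obtain ⟨y, hy, hy'⟩ := dom_mem hk S hS i hi 3 (by norm_num)
    have hfin : (slice6 k S i).Finite := S.finite_toSet.subset (fun z hz => hz.1)
    have ner : ∀ a b : ℕ, a ≤ 5 → b ≤ 5 → a ≠ b →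
        (Sum.inr (Fidx k i a) : ZMod (6*k) ⊕ ZMod (6*k)) ≠ Sum.inr (Fidx k i b) := by
      intro a b ha hb hab h
      exact hab (Fidx_inj hk hi ha hb (Sum.inr.inj h))
    have nel : ∀ a b : ℕ, a ≤ 5 → b ≤ 5 → a ≠ b →
        (Sum.inl (Fidx k i a) : ZMod (6*k) ⊕ ZMod (6*k)) ≠ Sum.inl (Fidx k i b) := by
      intro a b ha hb hab h
      exact hab (Fidx_inj hk hi ha hb (Sum.inl.inj h))
    norm_num at hx' hy'
    have hxy : x ≠ y := by
      rcases hx' with rfl | rfl | rfl | rfl <;> rcases hy' with rfl | rfl | rfl | rfl <;>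
        first
        | exact ner _ _ (by norm_num) (by norm_num) (by norm_num)
        | exact nel _ _ (by norm_num) (by norm_num) (by norm_num)
        | simp
    calc 2 = ({x, y} : Set _).ncard := (Set.ncard_pair hxy).symm
      _ ≤ _ := Set.ncard_le_ncard (by rintro z (rfl | rfl) <;> assumption) hfin
  · intro ℓ hℓ hT
    have hfin : (slice6 k S ℓ).Finite := S.finite_toSet.subset (fun z hz => hz.1)
    obtain ⟨u, hu⟩ := Set.ncard_eq_one.mp hT
    have huT : u ∈ {x ∈ slice6 k S ℓ |
        ∃ j ≤ 5, x = Sum.inr ((ℓ + j * k : ℕ) : ZMod (6 * k))} := by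
      rw [hu]; exact rfl
    obtain ⟨huS, j₀, hj₀, rfl⟩ := huT
    have key : ∀ m ≤ 5, Sum.inr (Fidx k ℓ m) ∈ slice6 k S ℓ → m = j₀ := by
      intro m hm hmem
      have hmu : (Sum.inr (Fidx k ℓ m) : ZMod (6*k) ⊕ ZMod (6*k))
          = Sum.inr ((ℓ + j₀ * k : ℕ) : ZMod (6 * k)) := by
        have : (Sum.inr (Fidx k ℓ m) : ZMod (6*k) ⊕ ZMod (6*k))
            ∈ ({Sum.inr ((ℓ + j₀ * k : ℕ) : ZMod (6 * k))} :
                Set (ZMod (6*k) ⊕ ZMod (6*k))) := by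
          rw [← hu]; exact ⟨hmem, m, hm, rfl⟩
        exact this
      exact Fidx_inj hk hℓ hm hj₀ (Sum.inr.inj hmu)
    have getOuter : ∀ j ≤ 5, j ≠ j₀ → (j + 1) % 6 ≠ j₀ → (j + 5) % 6 ≠ j₀ →
        Sum.inl (Fidx k ℓ j) ∈ slice6 k S ℓ := by
      intro j hj h1 h2 h3
      obtain ⟨x, hx, hx'⟩ := dom_mem hk S hS ℓ hℓ j hj
      rcases hx' with rfl | rfl | rfl | rfl
      · exact hx
      · exact absurd (key j hj hx) h1
      · exact absurd (key _ (by omega) hx) h2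
      · exact absurd (key _ (by omega) hx) h3
    have ha := getOuter ((j₀ + 2) % 6) (by omega) (by omega) (by omega) (by omega)
    have hb := getOuter ((j₀ + 3) % 6) (by omega) (by omega) (by omega) (by omega)
    have hc := getOuter ((j₀ + 4) % 6) (by omega) (by omega) (by omega) (by omega)
    set D : Set (ZMod (6*k) ⊕ ZMod (6*k)) :=
      {Sum.inr ((ℓ + j₀ * k : ℕ) : ZMod (6 * k)), Sum.inl (Fidx k ℓ ((j₀ + 2) % 6)),
        Sum.inl (Fidx k ℓ ((j₀ + 3) % 6)), Sum.inl (Fidx k ℓ ((j₀ + 4) % 6))} with hD_def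
    have hD : D ⊆ slice6 k S ℓ := by
      rintro z (rfl | rfl | rfl | rfl)
      · exact huS
      · exact ha
      · exact hb
      · exact hc
    have nel : ∀ a b : ℕ, a ≤ 5 → b ≤ 5 → a ≠ b → Fidx k ℓ a ≠ Fidx k ℓ b := by
      intro a b h1 h2 h3 h
      exact h3 (Fidx_inj hk hℓ h1 h2 h)
    have hcard : D.ncard = 4 := by
      rw [hD_def,
        Set.ncard_insert_of_notMem (by simp) (Set.toFinite _),
        Set.ncard_insert_of_notMem
          (by simp [nel ((j₀+2)%6) ((j₀+3)%6) (by omega) (by omega) (by omega),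
            nel ((j₀+2)%6) ((j₀+4)%6) (by omega) (by omega) (by omega)])
          (Set.toFinite _),
        Set.ncard_insert_of_notMem
          (by simp [nel ((j₀+3)%6) ((j₀+4)%6) (by omega) (by omega) (by omega)])
          (Set.toFinite _),
        Set.ncard_singleton]
    calc 4 = D.ncard := hcard.symm
      _ ≤ _ := Set.ncard_le_ncard hD hfin
end

section
/- Let S be a dominating set of P(6k,k) with k ≥ 4, and for 0 ≤ i ≤ k−1 let S_i = S ∩ ({v_{i+jk} : 0 ≤ j ≤ 5} ∪ {u_{i+jk} : 0 ≤ j ≤ 5}). Then for every i (indices mod k), |S_{i−1}| + |S_i| + |S_{i+1}| ≥ 10. -/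
open SimpleGraph

def pc (m : ℕ) : ℕ :=
  (m &&& 1) + (m >>> 1 &&& 1) + (m >>> 2 &&& 1) + (m >>> 3 &&& 1) +
  (m >>> 4 &&& 1) + (m >>> 5 &&& 1)

def nbm (m : ℕ) : ℕ :=
  m ||| (((m <<< 1) ||| (m >>> 5)) &&& 63) ||| (((m >>> 1) ||| (m <<< 5)) &&& 63)

def cpl (m : ℕ) : ℕ := 63 ^^^ (m &&& 63)

def domF (x : ℕ) : ℕ :=
  if cpl x = 0 then 0
  else if cpl x &&& cpl 35 = 0 ∨ cpl x &&& cpl 7 = 0 ∨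
          cpl x &&& cpl 14 = 0 ∨ cpl x &&& cpl 28 = 0 ∨
          cpl x &&& cpl 56 = 0 ∨ cpl x &&& cpl 49 = 0 then 1
  else 2

def pairT (u : Nat) : Nat := (if u &&& 1 = 0 then (if u &&& 2 = 0 then (if u &&& 4 = 0 then (if u &&& 8 = 0 then (if u &&& 16 = 0 then (if u &&& 32 = 0 then 4 else 5) else (if u &&& 32 = 0 then 5 else 6)) else (if u &&& 16 = 0 then (if u &&& 32 = 0 then 5 else 6) else (if u &&& 32 = 0 then 6 else 6))) else (if u &&& 8 = 0 then (if u &&& 16 = 0 then (if u &&& 32 = 0 then 5 else 6) else (if u &&& 32 = 0 then 6 else 7)) else (if u &&& 16 = 0 then (if u &&& 32 = 0 then 6 else 7) else (if u &&& 32 = 0 then 6 else 7)))) else (if u &&& 4 = 0 then (if u &&& 8 = 0 then (if u &&& 16 = 0 then (if u &&& 32 = 0 then 5 else 6) else (if u &&& 32 = 0 then 6 else 7)) else (if u &&& 16 = 0 then (if u &&& 32 = 0 then 6 else 7) else (if u &&& 32 = 0 then 7 else 7))) else (if u &&& 8 = 0 then (if u &&& 16 = 0 then (if u &&& 32 = 0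 then 6 else 7) else (if u &&& 32 = 0 then 7 else 8)) else (if u &&& 16 = 0 then (if u &&& 32 = 0 then 6 else 7) else (if u &&& 32 = 0 then 7 else 8))))) else (if u &&& 2 = 0 then (if u &&& 4 = 0 then (if u &&& 8 = 0 then (if u &&& 16 = 0 then (if u &&& 32 = 0 then 5 else 6) else (if u &&& 32 = 0 then 6 else 6)) else (if u &&& 16 = 0 then (if u &&& 32 = 0 then 6 else 7) else (if u &&& 32 = 0 then 7 else 7))) else (if u &&& 8 = 0 then (if u &&& 16 = 0 then (if u &&& 32 = 0 then 6 else 7) else (if u &&& 32 = 0 then 7 else 7)) else (if u &&& 16 = 0 then (if u &&& 32 = 0 then 7 else 8) else (if u &&& 32 = 0 then 7 else 8)))) else (if u &&& 4 = 0 then (if u &&& 8 = 0 then (if u &&& 16 = 0 then (if u &&& 32 = 0 then 6 else 6) else (if u &&& 32 = 0 then 7 else 7)) else (if u &&& 16 = 0 then (if u &&& 32 = 0 then 7 else 7) else (if u &&& 32 = 0 then 8 else 8))) else (if u &&& 8 = 0 then (if u &&& 16 = 0 then (if u &&& 32 = 0 then 6 else 7) else (if u &&& 32 = 0 then 7 else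 8)) else (if u &&& 16 = 0 then (if u &&& 32 = 0 then 7 else 8) else (if u &&& 32 = 0 then 8 else 8))))))

set_option maxRecDepth 100000 in
set_option maxHeartbeats 1000000 in
theorem pair_le : ∀ x < 64, ∀ z < 64,
    pairT (x ||| z) ≤ domF x + pc x + domF z + pc z := by decide

set_option maxRecDepth 100000 in
set_option maxHeartbeats 1000000 in
theorem maskKey2 : ∀ y < 64, ∀ u < 64,
    10 ≤ pairT u + pc y + pc (63 ^^^ (u ||| y)) + domF (y ||| nbm (63 ^^^ (u ||| y))) := by
  decide

theorem maskKey : ∀ x < 64, ∀ y < 64, ∀ z < 64,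
    10 ≤ domF x + pc x + pc (63 ^^^ (x ||| y ||| z)) +
      domF (y ||| nbm (63 ^^^ (x ||| y ||| z))) + pc y + domF z + pc z := by
  intro x hx y hy z hz
  have h1 := pair_le x hx z hz
  have hu : x ||| z < 64 := Nat.or_lt_two_pow (n := 6) hx hz
  have h2 := maskKey2 y hy (x ||| z) hu
  have hcomm : x ||| z ||| y = x ||| y ||| z := by
    rw [Nat.lor_assoc, Nat.lor_assoc, Nat.lor_comm z y]
  rw [hcomm] at h2
  omega

def enc (X : Finset (ZMod 6)) : ℕ := ∑ j ∈ X, 2 ^ j.val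

set_option maxRecDepth 100000 in
theorem enc_lt : ∀ X : Finset (ZMod 6), enc X < 64 := by decide

set_option maxRecDepth 100000 in
theorem enc_card : ∀ X : Finset (ZMod 6), X.card = pc (enc X) := by decide

set_option maxRecDepth 100000 in
set_option maxHeartbeats 1000000 in
theorem enc_union : ∀ X Y : Finset (ZMod 6), enc (X ∪ Y) = enc X ||| enc Y := by decide

set_option maxRecDepth 100000 in
theorem enc_compl : ∀ W : Finset (ZMod 6), enc (Finset.univ \ W) = 63 ^^^ enc W := by decide

set_option maxRecDepth 100000 in
theorem enc_N : ∀ R : Finset (ZMod 6),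
    enc (Finset.univ.filter (fun j => j - 1 ∈ R ∨ j ∈ R ∨ j + 1 ∈ R)) = nbm (enc R) := by decide

set_option maxRecDepth 100000 in
set_option maxHeartbeats 1000000 in
theorem L1 : ∀ A X : Finset (ZMod 6),
    (∀ j, j ∈ A ∨ j + 1 ∈ A ∨ j - 1 ∈ A ∨ j ∈ X) → domF (enc X) ≤ A.card := by decide

theorem key (A X B Y C Z : Finset (ZMod 6))
    (hA : ∀ j, j ∈ A ∨ j + 1 ∈ A ∨ j - 1 ∈ A ∨ j ∈ X)
    (hB : ∀ j, j ∈ B ∨ j + 1 ∈ B ∨ j - 1 ∈ B ∨ j ∈ Y)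
    (hC : ∀ j, j ∈ C ∨ j + 1 ∈ C ∨ j - 1 ∈ C ∨ j ∈ Z)
    (hM : ∀ j, j ∈ B ∨ j ∈ Y ∨ j ∈ X ∨ j ∈ Z) :
    10 ≤ A.card + X.card + B.card + Y.card + C.card + Z.card := by
  classical
  set R : Finset (ZMod 6) := Finset.univ \ (X ∪ Y ∪ Z) with hR
  have hRB : R ⊆ B := by
    intro j hj
    rw [hR, Finset.mem_sdiff, Finset.mem_union, Finset.mem_union] at hj
    rcases hM j with h | h | h | h
    · exact h
    all_goals exact absurd (by tauto) hj.2
  set NR : Finset (ZMod 6) :=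
    Finset.univ.filter (fun j => j - 1 ∈ R ∨ j ∈ R ∨ j + 1 ∈ R) with hNR
  set XM := Y ∪ NR with hXM
  have hmid : ∀ j, j ∈ B \ R ∨ j + 1 ∈ B \ R ∨ j - 1 ∈ B \ R ∨ j ∈ XM := by
    intro j
    by_cases hjx : j ∈ XM
    · exact Or.inr (Or.inr (Or.inr hjx))
    have hnotY : j ∉ Y := fun h => hjx (Finset.mem_union_left _ h)
    have hnotN : j ∉ NR := fun h => hjx (Finset.mem_union_right _ h)
    rw [hNR, Finset.mem_filter] at hnotN
    push_neg at hnotN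
    have h3 := hnotN (Finset.mem_univ j)
    rcases hB j with h | h | h | h
    · exact Or.inl (Finset.mem_sdiff.2 ⟨h, h3.2.1⟩)
    · exact Or.inr (Or.inl (Finset.mem_sdiff.2 ⟨h, h3.2.2⟩))
    · exact Or.inr (Or.inr (Or.inl (Finset.mem_sdiff.2 ⟨h, h3.1⟩)))
    · exact absurd h hnotY
  have hA' := L1 A X hA
  have hC' := L1 C Z hC
  have hB' := L1 (B \ R) XM hmid
  have hcardB : (B \ R).card + R.card = B.card := Finset.card_sdiff_add_card_eq_card hRB
  have eR : enc R = 63 ^^^ (enc X ||| enc Y ||| enc Z) := by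
    rw [hR, enc_compl, enc_union, enc_union]
  have eXM : enc XM = enc Y ||| nbm (enc R) := by
    rw [hXM, enc_union, hNR, enc_N]
  have hmk := maskKey (enc X) (enc_lt X) (enc Y) (enc_lt Y) (enc Z) (enc_lt Z)
  rw [← eR, ← eXM] at hmk
  have cX := enc_card X
  have cY := enc_card Y
  have cZ := enc_card Z
  have cR := enc_card R
  omega



def wv (k c : ℕ) (j : ZMod 6) : ZMod (6 * k) := ((c + j.val * k : ℕ) : ZMod (6 * k))

lemma mulk (k m : ℕ) : ((m % 6 * k : ℕ) : ZMod (6 * k)) = ((m * k : ℕ) : ZMod (6 * k)) := by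
  have h : m * k = m / 6 * (6 * k) + m % 6 * k := by
    conv_lhs => rw [← Nat.div_add_mod m 6]
    ring
  have h2 : ((m / 6 * (6 * k) : ℕ) : ZMod (6 * k)) = 0 := by
    rw [Nat.cast_mul, ZMod.natCast_self, mul_zero]
  rw [h, Nat.cast_add, h2, zero_add]

lemma val_add_one (j : ZMod 6) : (j + 1).val = (j.val + 1) % 6 := by
  have h1 : (1 : ZMod 6).val = 1 := rfl
  rw [ZMod.val_add, h1]

lemma wsucc (k c : ℕ) (j : ZMod 6) :
    wv k c (j + 1) = wv k c j + (k : ZMod (6 * k)) := by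
  unfold wv
  rw [Nat.cast_add, Nat.cast_add, val_add_one, mulk]
  push_cast
  ring

lemma wpred (k c : ℕ) (j : ZMod 6) :
    wv k c (j - 1) = wv k c j - (k : ZMod (6 * k)) := by
  have h := wsucc k c (j - 1)
  rw [sub_add_cancel] at h
  rw [h]
  ring

lemma wco (k c : ℕ) (j : ZMod 6) : wv k (c + 1) j = wv k c j + 1 := by
  unfold wv
  push_cast
  ring

lemma wleft (k i : ℕ) (hk : 1 ≤ k) (j : ZMod 6) :
    wv k (i + k - 1) (j - 1) = wv k i j - 1 := by
  rw [wpred]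
  unfold wv
  have h : i + k - 1 + j.val * k + 1 = i + j.val * k + k := by omega
  have h2 : ((i + k - 1 + j.val * k : ℕ) : ZMod (6 * k)) + 1
      = ((i + j.val * k + k : ℕ) : ZMod (6 * k)) := by
    rw [← h]; push_cast; ring
  have h3 : ((i + k - 1 + j.val * k : ℕ) : ZMod (6 * k))
      = ((i + j.val * k : ℕ) : ZMod (6 * k)) + k - 1 := by
    push_cast at h2 ⊢
    linear_combination h2
  rw [h3]
  ring

/-! ### adjacency -/

lemma petersen_adj_inr {n k : ℕ} (u : ZMod n ⊕ ZMod n) (t : ZMod n)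
    (h : (petersen n k).Adj u (Sum.inr t)) :
    u = Sum.inr (t + k) ∨ u = Sum.inr (t - k) ∨ u = Sum.inl t := by
  rw [petersen, SimpleGraph.fromRel_adj] at h
  obtain ⟨hne, h⟩ := h
  rcases u with a | a
  · dsimp only at h
    rcases h with h | h
    · exact Or.inr (Or.inr (by rw [h]))
    · exact absurd h not_false
  · dsimp only at h
    rcases h with h | h
    · exact Or.inr (Or.inl (by rw [h]; ring_nf))
    · exact Or.inl (by rw [h])

lemma petersen_adj_inl {n k : ℕ} (u : ZMod n ⊕ ZMod n) (t : ZMod n)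
    (h : (petersen n k).Adj u (Sum.inl t)) :
    u = Sum.inl (t + 1) ∨ u = Sum.inl (t - 1) ∨ u = Sum.inr t := by
  rw [petersen, SimpleGraph.fromRel_adj] at h
  obtain ⟨hne, h⟩ := h
  rcases u with a | a
  · dsimp only at h
    rcases h with h | h
    · exact Or.inr (Or.inl (by rw [h]; ring_nf))
    · exact Or.inl (by rw [h])
  · dsimp only at h
    rcases h with h | h
    · exact absurd h not_false
    · exact Or.inr (Or.inr (by rw [h]))

section withS

variable {k : ℕ} (S : Finset (ZMod (6 * k) ⊕ ZMod (6 * k)))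

lemma dom_inr (hS : IsDominating (petersen (6 * k) k) ↑S) (t : ZMod (6 * k)) :
    Sum.inr t ∈ S ∨ Sum.inr (t + k) ∈ S ∨ Sum.inr (t - k) ∈ S ∨ Sum.inl t ∈ S := by
  rcases hS (Sum.inr t) with h | ⟨u, hu, hadj⟩
  · exact Or.inl (by simpa using h)
  rcases petersen_adj_inr u t hadj with h | h | h
  · subst h; exact Or.inr (Or.inl (by simpa using hu))
  · subst h; exact Or.inr (Or.inr (Or.inl (by simpa using hu)))
  · subst h; exact Or.inr (Or.inr (Or.inr (by simpa using hu)))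

lemma dom_inl (hS : IsDominating (petersen (6 * k) k) ↑S) (t : ZMod (6 * k)) :
    Sum.inl t ∈ S ∨ Sum.inl (t + 1) ∈ S ∨ Sum.inl (t - 1) ∈ S ∨ Sum.inr t ∈ S := by
  rcases hS (Sum.inl t) with h | ⟨u, hu, hadj⟩
  · exact Or.inl (by simpa using h)
  rcases petersen_adj_inl u t hadj with h | h | h
  · subst h; exact Or.inr (Or.inl (by simpa using hu))
  · subst h; exact Or.inr (Or.inr (Or.inl (by simpa using hu)))
  · subst h; exact Or.inr (Or.inr (Or.inr (by simpa using hu)))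

end withS

/-! ### slices and cards -/

section slices

variable {k : ℕ} (S : Finset (ZMod (6 * k) ⊕ ZMod (6 * k)))

lemma wv_inj (hk : 0 < k) (c : ℕ) : Function.Injective (wv k c) := by
  haveI : NeZero (6 * k) := ⟨by omega⟩
  intro j1 j2 h
  unfold wv at h
  rw [Nat.cast_add, Nat.cast_add] at h
  have h' : ((j1.val * k : ℕ) : ZMod (6 * k)) = ((j2.val * k : ℕ) : ZMod (6 * k)) :=
    add_left_cancel h
  have l1 : j1.val * k < 6 * k := by
    have := j1.val_lt
    exact Nat.mul_lt_mul_of_lt_of_le this (le_refl k) hk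
  have l2 : j2.val * k < 6 * k := by
    have := j2.val_lt
    exact Nat.mul_lt_mul_of_lt_of_le this (le_refl k) hk
  have hv : j1.val * k = j2.val * k := by
    have := congrArg ZMod.val h'
    rwa [ZMod.val_cast_of_lt l1, ZMod.val_cast_of_lt l2] at this
  have : j1.val = j2.val := Nat.eq_of_mul_eq_mul_right hk hv
  exact ZMod.val_injective 6 this

lemma mem_slice_iff (c : ℕ) (x : ZMod (6 * k) ⊕ ZMod (6 * k)) :
    x ∈ slice6 k S c ↔ x ∈ S ∧ ∃ j : ZMod 6, x = Sum.inl (wv k c j) ∨ x = Sum.inr (wv k c j) := by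
  constructor
  · rintro ⟨hx, j, hj5, hj⟩
    refine ⟨hx, (j : ZMod 6), ?_⟩
    have hv : ((j : ZMod 6)).val = j := by
      rw [ZMod.val_natCast]
      omega
    unfold wv
    rw [hv]
    exact hj
  · rintro ⟨hx, j, hj⟩
    exact ⟨hx, j.val, by have := j.val_lt; omega, hj⟩

lemma wv_mod (c : ℕ) (j : ZMod 6) : wv k (c % k) (j + (c / k : ℕ)) = wv k c j := by
  unfold wv
  have hval : ((j + (c / k : ℕ)).val) = (j.val + c / k) % 6 := by
    have := j.val_lt
    rw [ZMod.val_add, ZMod.val_natCast]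
    omega
  rw [hval, Nat.cast_add, Nat.cast_add, mulk]
  have hc : c = c % k + k * (c / k) := (Nat.mod_add_div c k).symm
  conv_rhs => rw [hc]
  push_cast
  ring

lemma slice_eq_mod (c : ℕ) : slice6 k S c = slice6 k S (c % k) := by
  ext x
  rw [mem_slice_iff, mem_slice_iff]
  constructor
  · rintro ⟨hx, j, hj⟩
    exact ⟨hx, j + (c / k : ℕ), by rw [wv_mod]; exact hj⟩
  · rintro ⟨hx, j, hj⟩
    refine ⟨hx, j - (c / k : ℕ), ?_⟩
    rw [← wv_mod (k := k) c (j - (c / k : ℕ)), sub_add_cancel]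
    exact hj

lemma slice_card (hk : 0 < k) (c : ℕ) :
    (slice6 k S c).ncard =
      (Finset.univ.filter (fun j : ZMod 6 => Sum.inr (wv k c j) ∈ S)).card +
      (Finset.univ.filter (fun j : ZMod 6 => Sum.inl (wv k c j) ∈ S)).card := by
  classical
  set T1 := (Finset.univ.filter (fun j : ZMod 6 => Sum.inr (wv k c j) ∈ S)).image
      (fun j => (Sum.inr (wv k c j) : ZMod (6 * k) ⊕ ZMod (6 * k))) with hT1
  set T2 := (Finset.univ.filter (fun j : ZMod 6 => Sum.inl (wv k c j) ∈ S)).image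
      (fun j => (Sum.inl (wv k c j) : ZMod (6 * k) ⊕ ZMod (6 * k))) with hT2
  have hset : slice6 k S c = ↑(T1 ∪ T2) := by
    ext x
    rw [mem_slice_iff, Finset.coe_union, Set.mem_union]
    simp only [hT1, hT2, Finset.coe_image, Set.mem_image, Finset.mem_coe,
      Finset.mem_filter, Finset.mem_univ, true_and]
    constructor
    · rintro ⟨hx, j, hj | hj⟩
      · exact Or.inr ⟨j, by rw [← hj]; exact hx, hj.symm⟩
      · exact Or.inl ⟨j, by rw [← hj]; exact hx, hj.symm⟩
    · rintro (⟨j, hj, hx⟩ | ⟨j, hj, hx⟩)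
      · exact ⟨hx ▸ hj, j, Or.inr hx.symm⟩
      · exact ⟨hx ▸ hj, j, Or.inl hx.symm⟩
  rw [hset, Set.ncard_coe_finset]
  have hdisj : Disjoint T1 T2 := by
    rw [Finset.disjoint_left]
    rintro x hx1 hx2
    rw [hT1, Finset.mem_image] at hx1
    rw [hT2, Finset.mem_image] at hx2
    obtain ⟨j1, _, h1⟩ := hx1
    obtain ⟨j2, _, h2⟩ := hx2
    rw [← h1] at h2
    exact Sum.inl_ne_inr h2
  rw [Finset.card_union_of_disjoint hdisj]
  congr 1
  · rw [hT1]
    exact Finset.card_image_of_injective _ (Sum.inr_injective.comp (wv_inj hk c))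
  · rw [hT2]
    exact Finset.card_image_of_injective _ (Sum.inl_injective.comp (wv_inj hk c))

lemma filter_shift_card (p : ZMod 6 → Prop) [DecidablePred p] :
    (Finset.univ.filter (fun j => p (j - 1))).card = (Finset.univ.filter p).card := by
  apply Finset.card_bij (fun j _ => j - 1)
  · intro a ha
    rw [Finset.mem_filter] at ha ⊢
    exact ⟨Finset.mem_univ _, ha.2⟩
  · intro a _ b _ h
    exact sub_left_injective h
  · intro b hb
    refine ⟨b + 1, ?_, by rw [add_sub_cancel_right]⟩
    rw [Finset.mem_filter] at hb ⊢
    refine ⟨Finset.mem_univ _, ?_⟩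
    rw [add_sub_cancel_right]
    exact hb.2

end slices


theorem slice6_triple (k : ℕ) (hk : 4 ≤ k)
    (S : Finset (ZMod (6 * k) ⊕ ZMod (6 * k))) (hS : IsDominating (petersen (6 * k) k) ↑S)
    (i : ℕ) (hi : i < k) :
    10 ≤ (slice6 k S ((i + k - 1) % k)).ncard + (slice6 k S i).ncard +
         (slice6 k S ((i + 1) % k)).ncard := by
  classical
  have hk0 : 0 < k := by omega
  set A := Finset.univ.filter (fun j : ZMod 6 => Sum.inr (wv k (i + k - 1) (j - 1)) ∈ S) with hA0
  set X := Finset.univ.filter (fun j : ZMod 6 => Sum.inl (wv k (i + k - 1) (j - 1)) ∈ S) with hX0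
  set B := Finset.univ.filter (fun j : ZMod 6 => Sum.inr (wv k i j) ∈ S) with hB0
  set Y := Finset.univ.filter (fun j : ZMod 6 => Sum.inl (wv k i j) ∈ S) with hY0
  set C := Finset.univ.filter (fun j : ZMod 6 => Sum.inr (wv k (i + 1) j) ∈ S) with hC0
  set Z := Finset.univ.filter (fun j : ZMod 6 => Sum.inl (wv k (i + 1) j) ∈ S) with hZ0
  have hA : ∀ j, j ∈ A ∨ j + 1 ∈ A ∨ j - 1 ∈ A ∨ j ∈ X := by
    intro j
    have h := dom_inr S hS (wv k (i + k - 1) (j - 1))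
    simp only [hA0, hX0, Finset.mem_filter, Finset.mem_univ, true_and]
    have e1 : wv k (i + k - 1) (j - 1) + k = wv k (i + k - 1) (j + 1 - 1) := by
      rw [add_sub_cancel_right, ← wsucc k (i + k - 1) (j - 1), sub_add_cancel]
    have e2 : wv k (i + k - 1) (j - 1) - k = wv k (i + k - 1) (j - 1 - 1) := by
      rw [wpred k (i + k - 1) (j - 1)]
    rcases h with h | h | h | h
    · exact Or.inl h
    · exact Or.inr (Or.inl (by rw [← e1]; exact h))
    · exact Or.inr (Or.inr (Or.inl (by rw [← e2]; exact h)))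
    · exact Or.inr (Or.inr (Or.inr h))
  have hB : ∀ j, j ∈ B ∨ j + 1 ∈ B ∨ j - 1 ∈ B ∨ j ∈ Y := by
    intro j
    have h := dom_inr S hS (wv k i j)
    simp only [hB0, hY0, Finset.mem_filter, Finset.mem_univ, true_and]
    rcases h with h | h | h | h
    · exact Or.inl h
    · exact Or.inr (Or.inl (by rw [wsucc]; exact h))
    · exact Or.inr (Or.inr (Or.inl (by rw [wpred]; exact h)))
    · exact Or.inr (Or.inr (Or.inr h))
  have hC : ∀ j, j ∈ C ∨ j + 1 ∈ C ∨ j - 1 ∈ C ∨ j ∈ Z := by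
    intro j
    have h := dom_inr S hS (wv k (i + 1) j)
    simp only [hC0, hZ0, Finset.mem_filter, Finset.mem_univ, true_and]
    rcases h with h | h | h | h
    · exact Or.inl h
    · exact Or.inr (Or.inl (by rw [wsucc]; exact h))
    · exact Or.inr (Or.inr (Or.inl (by rw [wpred]; exact h)))
    · exact Or.inr (Or.inr (Or.inr h))
  have hM : ∀ j, j ∈ B ∨ j ∈ Y ∨ j ∈ X ∨ j ∈ Z := by
    intro j
    have h := dom_inl S hS (wv k i j)
    simp only [hB0, hY0, hX0, hZ0, Finset.mem_filter, Finset.mem_univ, true_and]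
    rcases h with h | h | h | h
    · exact Or.inr (Or.inl h)
    · exact Or.inr (Or.inr (Or.inr (by rw [wco]; exact h)))
    · exact Or.inr (Or.inr (Or.inl (by rw [wleft k i (by omega)]; exact h)))
    · exact Or.inl h
  have hkey := key A X B Y C Z hA hB hC hM
  have hleft : (slice6 k S ((i + k - 1) % k)).ncard = A.card + X.card := by
    rw [← slice_eq_mod S (i + k - 1), slice_card S hk0 (i + k - 1), hA0, hX0]
    congr 1
    · exact (filter_shift_card (fun j => Sum.inr (wv k (i + k - 1) j) ∈ S)).symm
    · exact (filter_shift_card (fun j => Sum.inl (wv k (i + k - 1) j) ∈ S)).symm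
  have hmid : (slice6 k S i).ncard = B.card + Y.card := by
    rw [slice_card S hk0 i, hB0, hY0]
  have hright : (slice6 k S ((i + 1) % k)).ncard = C.card + Z.card := by
    rw [← slice_eq_mod S (i + 1), slice_card S hk0 (i + 1), hC0, hZ0]
  omega
end

section
/- For every k ≥ 4 with k ≡ 0 (mod 3), the set S = {u_i : 0 ≤ i ≤ k−1} ∪ {u_i : 3k ≤ i ≤ 4k−1} ∪ {v_{k+3i+1} : 0 ≤ i ≤ 2k/3−1} ∪ {v_{4k+3i+1} : 0 ≤ i ≤ 2k/3−1} is a dominating set of P(6k,k) of cardinality 10k/3. -/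
open SimpleGraph

lemma pet_adj_outer {n k : ℕ} (a : ZMod n) (h : (1:ZMod n) ≠ 0) :
    (petersen n k).Adj (Sum.inl a) (Sum.inl (a+1)) :=
  ⟨fun hc => h (left_eq_add.mp (Sum.inl.inj hc)), Or.inl rfl⟩

lemma pet_adj_spoke {n k : ℕ} (a : ZMod n) :
    (petersen n k).Adj (Sum.inr a) (Sum.inl a) :=
  ⟨by simp, Or.inr rfl⟩

lemma pet_adj_inner {n k : ℕ} (a : ZMod n) (h : (k:ZMod n) ≠ 0) :
    (petersen n k).Adj (Sum.inr a) (Sum.inr (a + (k:ZMod n))) :=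
  ⟨fun hc => h (left_eq_add.mp (Sum.inr.inj hc)), Or.inl rfl⟩

theorem P6k_dominating_set_k0mod3 (k : ℕ) (hk : 4 ≤ k) (hk3 : k % 3 = 0) :
    IsDominating (petersen (6 * k) k)
      ↑((((Finset.range k).image fun i =>
            (Sum.inr ((i : ℕ) : ZMod (6 * k)) : ZMod (6 * k) ⊕ ZMod (6 * k))) ∪
        ((Finset.range k).image fun i =>
            (Sum.inr ((3 * k + i : ℕ) : ZMod (6 * k)) : ZMod (6 * k) ⊕ ZMod (6 * k))) ∪
        ((Finset.range (2 * k / 3)).image fun i =>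
            (Sum.inl ((k + 3 * i + 1 : ℕ) : ZMod (6 * k)) : ZMod (6 * k) ⊕ ZMod (6 * k))) ∪
        ((Finset.range (2 * k / 3)).image fun i =>
            (Sum.inl ((4 * k + 3 * i + 1 : ℕ) : ZMod (6 * k)) : ZMod (6 * k) ⊕ ZMod (6 * k))))) ∧
    ((((Finset.range k).image fun i =>
            (Sum.inr ((i : ℕ) : ZMod (6 * k)) : ZMod (6 * k) ⊕ ZMod (6 * k))) ∪
        ((Finset.range k).image fun i =>
            (Sum.inr ((3 * k + i : ℕ) : ZMod (6 * k)) : ZMod (6 * k) ⊕ ZMod (6 * k))) ∪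
        ((Finset.range (2 * k / 3)).image fun i =>
            (Sum.inl ((k + 3 * i + 1 : ℕ) : ZMod (6 * k)) : ZMod (6 * k) ⊕ ZMod (6 * k))) ∪
        ((Finset.range (2 * k / 3)).image fun i =>
            (Sum.inl ((4 * k + 3 * i + 1 : ℕ) : ZMod (6 * k)) : ZMod (6 * k) ⊕ ZMod (6 * k))))).card
      = 10 * k / 3 := by
  constructor
  ·
      haveI : NeZero (6*k) := ⟨by omega⟩
      haveI : Fact (1 < 6*k) := ⟨by omega⟩
      have h1ne : (1 : ZMod (6*k)) ≠ 0 := one_ne_zero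
      have hinj : ∀ a b : ℕ, a < 6*k → b < 6*k → ((a:ZMod (6*k)) = (b:ZMod (6*k))) → a = b := by
        intro a b ha hb h
        have := congrArg ZMod.val h
        rwa [ZMod.val_cast_of_lt ha, ZMod.val_cast_of_lt hb] at this
      have hkne : (k : ZMod (6*k)) ≠ 0 := by
        intro h
        have := hinj k 0 (by omega) (by omega) (by simpa using h)
        omega
      set S : Finset (ZMod (6*k) ⊕ ZMod (6*k)) :=
        (((Finset.range k).image fun i =>
                (Sum.inr ((i : ℕ) : ZMod (6 * k)) : ZMod (6 * k) ⊕ ZMod (6 * k))) ∪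
            ((Finset.range k).image fun i =>
                (Sum.inr ((3 * k + i : ℕ) : ZMod (6 * k)) : ZMod (6 * k) ⊕ ZMod (6 * k))) ∪
            ((Finset.range (2 * k / 3)).image fun i =>
                (Sum.inl ((k + 3 * i + 1 : ℕ) : ZMod (6 * k)) : ZMod (6 * k) ⊕ ZMod (6 * k))) ∪
            ((Finset.range (2 * k / 3)).image fun i =>
                (Sum.inl ((4 * k + 3 * i + 1 : ℕ) : ZMod (6 * k)) : ZMod (6 * k) ⊕ ZMod (6 * k)))) with hS
      have memA : ∀ i, i < k → (Sum.inr ((i:ℕ):ZMod (6*k)) : ZMod (6*k) ⊕ ZMod (6*k)) ∈ S := by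
        intro i hi
        simp only [hS, Finset.mem_union, Finset.mem_image, Finset.mem_range]
        exact Or.inl (Or.inl (Or.inl ⟨i, hi, rfl⟩))
      have memB : ∀ i, i < k → (Sum.inr ((3*k+i:ℕ):ZMod (6*k)) : ZMod (6*k) ⊕ ZMod (6*k)) ∈ S := by
        intro i hi
        simp only [hS, Finset.mem_union, Finset.mem_image, Finset.mem_range]
        exact Or.inl (Or.inl (Or.inr ⟨i, hi, rfl⟩))
      have memC : ∀ i, i < 2*k/3 → (Sum.inl ((k+3*i+1:ℕ):ZMod (6*k)) : ZMod (6*k) ⊕ ZMod (6*k)) ∈ S := by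
        intro i hi
        simp only [hS, Finset.mem_union, Finset.mem_image, Finset.mem_range]
        exact Or.inl (Or.inr ⟨i, hi, rfl⟩)
      have memD : ∀ i, i < 2*k/3 → (Sum.inl ((4*k+3*i+1:ℕ):ZMod (6*k)) : ZMod (6*k) ⊕ ZMod (6*k)) ∈ S := by
        intro i hi
        simp only [hS, Finset.mem_union, Finset.mem_image, Finset.mem_range]
        exact Or.inr ⟨i, hi, rfl⟩
      intro v
      obtain x | x := v
      · -- outer vertex
        have hx : ((x.val : ℕ) : ZMod (6*k)) = x := by
          rw [ZMod.natCast_val, ZMod.cast_id]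
        set j := x.val with hjdef
        have hj : j < 6*k := ZMod.val_lt x
        rcases (by omega : j < k ∨ (k ≤ j ∧ j < 3*k) ∨ (3*k ≤ j ∧ j < 4*k) ∨ (4*k ≤ j ∧ j < 6*k))
          with c | c | c | c
        · right
          refine ⟨Sum.inr ((j:ℕ):ZMod (6*k)), Finset.mem_coe.mpr (memA j c), ?_⟩
          rw [hx]; exact pet_adj_spoke x
        · -- k ≤ j < 3k
          set q := (j-k)/3 with hqdef
          set r := (j-k)%3 with hrdef
          have hqr : j = k + 3*q + r ∧ r < 3 := by omega
          rcases (by omega : r = 0 ∨ r = 1 ∨ r = 2) with hr | hr | hr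
          · right
            refine ⟨Sum.inl ((k+3*q+1:ℕ):ZMod (6*k)), Finset.mem_coe.mpr (memC q (by omega)), ?_⟩
            have e : ((k+3*q+1:ℕ):ZMod (6*k)) = x + 1 := by
              rw [← hx, show k+3*q+1 = j+1 from by omega]; push_cast; ring
            rw [e]; exact (pet_adj_outer x h1ne).symm
          · left
            have e : x = ((k+3*q+1:ℕ):ZMod (6*k)) := by rw [← hx]; congr 1; omega
            rw [e]
            exact Finset.mem_coe.mpr (memC q (by omega))
          · right
            refine ⟨Sum.inl ((k+3*q+1:ℕ):ZMod (6*k)), Finset.mem_coe.mpr (memC q (by omega)), ?_⟩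
            have e : x = ((k+3*q+1:ℕ):ZMod (6*k)) + 1 := by
              rw [← hx, show k+3*q+1 = j-1 from by omega, show j = (j-1)+1 from by omega]; push_cast; ring
            rw [e]; exact pet_adj_outer _ h1ne
        · right
          refine ⟨Sum.inr ((3*k+(j-3*k):ℕ):ZMod (6*k)), Finset.mem_coe.mpr (memB (j-3*k) (by omega)), ?_⟩
          have e : ((3*k+(j-3*k):ℕ):ZMod (6*k)) = x := by rw [← hx]; congr 1; omega
          rw [e]; exact pet_adj_spoke x
        · -- 4k ≤ j < 6k
          set q := (j-4*k)/3 with hqdef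
          set r := (j-4*k)%3 with hrdef
          have hqr : j = 4*k + 3*q + r ∧ r < 3 := by omega
          rcases (by omega : r = 0 ∨ r = 1 ∨ r = 2) with hr | hr | hr
          · right
            refine ⟨Sum.inl ((4*k+3*q+1:ℕ):ZMod (6*k)), Finset.mem_coe.mpr (memD q (by omega)), ?_⟩
            have e : ((4*k+3*q+1:ℕ):ZMod (6*k)) = x + 1 := by
              rw [← hx, show 4*k+3*q+1 = j+1 from by omega]; push_cast; ring
            rw [e]; exact (pet_adj_outer x h1ne).symm
          · left
            have e : x = ((4*k+3*q+1:ℕ):ZMod (6*k)) := by rw [← hx]; congr 1; omega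
            rw [e]
            exact Finset.mem_coe.mpr (memD q (by omega))
          · right
            refine ⟨Sum.inl ((4*k+3*q+1:ℕ):ZMod (6*k)), Finset.mem_coe.mpr (memD q (by omega)), ?_⟩
            have e : x = ((4*k+3*q+1:ℕ):ZMod (6*k)) + 1 := by
              rw [← hx, show 4*k+3*q+1 = j-1 from by omega, show j = (j-1)+1 from by omega]; push_cast; ring
            rw [e]; exact pet_adj_outer _ h1ne
      · -- inner vertex
        have hx : ((x.val : ℕ) : ZMod (6*k)) = x := by
          rw [ZMod.natCast_val, ZMod.cast_id]
        set j := x.val with hjdef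
        have hj : j < 6*k := ZMod.val_lt x
        rcases (by omega : j < k ∨ (k ≤ j ∧ j < 2*k) ∨ (2*k ≤ j ∧ j < 3*k) ∨ (3*k ≤ j ∧ j < 4*k)
            ∨ (4*k ≤ j ∧ j < 5*k) ∨ (5*k ≤ j ∧ j < 6*k)) with c | c | c | c | c | c
        · left
          have e : x = ((j:ℕ):ZMod (6*k)) := hx.symm
          rw [e]; exact Finset.mem_coe.mpr (memA j c)
        · right
          refine ⟨Sum.inr ((j-k:ℕ):ZMod (6*k)), Finset.mem_coe.mpr (memA (j-k) (by omega)), ?_⟩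
          have e : x = ((j-k:ℕ):ZMod (6*k)) + (k:ZMod (6*k)) := by
            rw [← hx, ← Nat.cast_add]; congr 1; omega
          rw [e]; exact pet_adj_inner _ hkne
        · right
          refine ⟨Sum.inr ((3*k+(j-2*k):ℕ):ZMod (6*k)), Finset.mem_coe.mpr (memB (j-2*k) (by omega)), ?_⟩
          have e : ((3*k+(j-2*k):ℕ):ZMod (6*k)) = x + (k:ZMod (6*k)) := by
            rw [← hx, ← Nat.cast_add]; congr 1; omega
          rw [e]; exact (pet_adj_inner x hkne).symm
        · left
          have e : x = ((3*k+(j-3*k):ℕ):ZMod (6*k)) := by rw [← hx]; congr 1; omega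
          rw [e]; exact Finset.mem_coe.mpr (memB (j-3*k) (by omega))
        · right
          refine ⟨Sum.inr ((3*k+(j-4*k):ℕ):ZMod (6*k)), Finset.mem_coe.mpr (memB (j-4*k) (by omega)), ?_⟩
          have e : x = ((3*k+(j-4*k):ℕ):ZMod (6*k)) + (k:ZMod (6*k)) := by
            rw [← hx, ← Nat.cast_add]; congr 1; omega
          rw [e]; exact pet_adj_inner _ hkne
        · right
          refine ⟨Sum.inr ((j-5*k:ℕ):ZMod (6*k)), Finset.mem_coe.mpr (memA (j-5*k) (by omega)), ?_⟩
          have e : ((j-5*k:ℕ):ZMod (6*k)) = x + (k:ZMod (6*k)) := by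
            have e6 : ((6*k:ℕ) : ZMod (6*k)) = 0 := ZMod.natCast_self _
            calc ((j-5*k:ℕ):ZMod (6*k))
                = ((j-5*k:ℕ):ZMod (6*k)) + ((6*k:ℕ):ZMod (6*k)) := by rw [e6, add_zero]
              _ = (((j-5*k)+6*k:ℕ):ZMod (6*k)) := (Nat.cast_add _ _).symm
              _ = ((j+k : ℕ):ZMod (6*k)) := by congr 1; omega
              _ = x + (k:ZMod (6*k)) := by rw [← hx, Nat.cast_add]
          rw [e]; exact (pet_adj_inner x hkne).symm
  ·
      haveI : NeZero (6*k) := ⟨by omega⟩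
      have hinj : ∀ a b : ℕ, a < 6*k → b < 6*k → ((a:ZMod (6*k)) = (b:ZMod (6*k))) → a = b := by
        intro a b ha hb h
        have := congrArg ZMod.val h
        rwa [ZMod.val_cast_of_lt ha, ZMod.val_cast_of_lt hb] at this
      have hAB : Disjoint
          ((Finset.range k).image fun i =>
              (Sum.inr ((i : ℕ) : ZMod (6 * k)) : ZMod (6 * k) ⊕ ZMod (6 * k)))
          ((Finset.range k).image fun i =>
              (Sum.inr ((3 * k + i : ℕ) : ZMod (6 * k)) : ZMod (6 * k) ⊕ ZMod (6 * k))) := by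
        rw [Finset.disjoint_left]
        intro a ha hb
        simp only [Finset.mem_image, Finset.mem_range] at ha hb
        obtain ⟨i, hi, rfl⟩ := ha
        obtain ⟨i', hi', he⟩ := hb
        have := hinj (3*k+i') i (by omega) (by omega) (Sum.inr.inj he)
        omega
      have hC : Disjoint
          ((((Finset.range k).image fun i =>
              (Sum.inr ((i : ℕ) : ZMod (6 * k)) : ZMod (6 * k) ⊕ ZMod (6 * k))) ∪
            ((Finset.range k).image fun i =>
              (Sum.inr ((3 * k + i : ℕ) : ZMod (6 * k)) : ZMod (6 * k) ⊕ ZMod (6 * k)))))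
          ((Finset.range (2 * k / 3)).image fun i =>
              (Sum.inl ((k + 3 * i + 1 : ℕ) : ZMod (6 * k)) : ZMod (6 * k) ⊕ ZMod (6 * k))) := by
        rw [Finset.disjoint_left]
        intro a ha hb
        simp only [Finset.mem_union, Finset.mem_image, Finset.mem_range] at ha hb
        obtain ⟨i, hi, rfl⟩ := hb
        rcases ha with ⟨i', _, h⟩ | ⟨i', _, h⟩ <;> exact absurd h (by simp)
      have hD : Disjoint
          (((((Finset.range k).image fun i =>
              (Sum.inr ((i : ℕ) : ZMod (6 * k)) : ZMod (6 * k) ⊕ ZMod (6 * k))) ∪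
            ((Finset.range k).image fun i =>
              (Sum.inr ((3 * k + i : ℕ) : ZMod (6 * k)) : ZMod (6 * k) ⊕ ZMod (6 * k)))) ∪
            ((Finset.range (2 * k / 3)).image fun i =>
              (Sum.inl ((k + 3 * i + 1 : ℕ) : ZMod (6 * k)) : ZMod (6 * k) ⊕ ZMod (6 * k)))))
          ((Finset.range (2 * k / 3)).image fun i =>
              (Sum.inl ((4 * k + 3 * i + 1 : ℕ) : ZMod (6 * k)) : ZMod (6 * k) ⊕ ZMod (6 * k))) := by
        rw [Finset.disjoint_left]
        intro a ha hb
        simp only [Finset.mem_union, Finset.mem_image, Finset.mem_range] at ha hb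
        obtain ⟨i, hi, rfl⟩ := hb
        rcases ha with (⟨i', _, h⟩ | ⟨i', _, h⟩) | ⟨i', hi', h⟩
        · exact absurd h (by simp)
        · exact absurd h (by simp)
        · have := hinj (k+3*i'+1) (4*k+3*i+1) (by omega) (by omega) (Sum.inl.inj h)
          omega
      rw [Finset.card_union_of_disjoint hD, Finset.card_union_of_disjoint hC,
        Finset.card_union_of_disjoint hAB]
      rw [Finset.card_image_of_injOn (by
          intro a ha b hb h
          simp only [Finset.coe_range, Set.mem_Iio] at ha hb
          exact hinj a b (by omega) (by omega) (Sum.inr.inj h)),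
        Finset.card_image_of_injOn (by
          intro a ha b hb h
          simp only [Finset.coe_range, Set.mem_Iio] at ha hb
          have := hinj (3*k+a) (3*k+b) (by omega) (by omega) (Sum.inr.inj h)
          omega),
        Finset.card_image_of_injOn (by
          intro a ha b hb h
          simp only [Finset.coe_range, Set.mem_Iio] at ha hb
          have := hinj (k+3*a+1) (k+3*b+1) (by omega) (by omega) (Sum.inl.inj h)
          omega),
        Finset.card_image_of_injOn (by
          intro a ha b hb h
          simp only [Finset.coe_range, Set.mem_Iio] at ha hb
          have := hinj (4*k+3*a+1) (4*k+3*b+1) (by omega) (by omega) (Sum.inl.inj h)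
          omega)]
      simp only [Finset.card_range]
      omega
end
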